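/- Let ω < 0, 0 < α ≤ 1 and 0 < αγ ≤ β ≤ 1. For every λ ∈ ℂ, the set {s ∈ ℂ : Re(s) ≥ 0 and F(s) = λ} of unstable roots of the characteristic equation is finite. -/

import Mathlib

open Real Complex Filter Set Topology

/-- The curve parametrization Λ(θ) bounding the stability region. -/
noncomputable def Lam (α β γ ω : ℝ) (θ : ℝ) : ℂ :=
  ((|ω| ^ (β / α) * Real.sin θ ^ (β / α - γ) * Real.sin (α * π / 2) ^ γ *
      Real.sin (α * π / 2 - θ) ^ (-(β / α)) : ℝ) : ℂ) *
    Complex.exp (Complex.I * ((γ * θ + (β - α * γ) * π / 2 : ℝ) : ℂ))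

/-- The characteristic function F(s) = s^(β-αγ) (s^α - ω)^γ (principal branches). -/
noncomputable def Fc (α β γ ω : ℝ) (s : ℂ) : ℂ :=
  s ^ ((β - α * γ : ℝ) : ℂ) * (s ^ ((α : ℝ) : ℂ) - (ω : ℂ)) ^ ((γ : ℝ) : ℂ)

/-- μ(θ) = (|ω| sin θ / sin(απ/2 - θ))^(1/α). -/
noncomputable def muP (α ω : ℝ) (θ : ℝ) : ℝ :=
  (|ω| * Real.sin θ / Real.sin (α * π / 2 - θ)) ^ (1 / α)

/-- ρ(θ) = |ω| sin(απ/2) / sin(απ/2 - θ). -/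
noncomputable def rhoP (α ω : ℝ) (θ : ℝ) : ℝ :=
  |ω| * Real.sin (α * π / 2) / Real.sin (α * π / 2 - θ)

lemma aux_re_nonneg (α : ℝ) (hα0 : 0 < α) (hα1 : α ≤ 1) (s : ℂ) (hs : 0 ≤ s.re) :
    0 ≤ (s ^ (α : ℂ)).re := by
  rcases eq_or_ne s 0 with rfl | hs0
  · rw [Complex.zero_cpow (by exact_mod_cast hα0.ne')]; simp
  · rw [Complex.cpow_def_of_ne_zero hs0, Complex.exp_re]
    have him : (Complex.log s * (α : ℂ)).im = s.arg * α := by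
      simp [Complex.mul_im, Complex.log_im]
    rw [him]
    refine mul_nonneg (Real.exp_pos _).le (Real.cos_nonneg_of_mem_Icc ?_)
    have h1 := abs_le.mp (Complex.abs_arg_le_pi_div_two_iff.mpr hs)
    constructor <;> nlinarith [h1.1, h1.2, Real.pi_pos]

lemma aux_abs_le (ω : ℝ) (hω : ω ≤ 0) (z : ℂ) (hz : 0 ≤ z.re) :
    ‖z‖ ≤ ‖z - (ω : ℂ)‖ := by
  rw [Complex.norm_eq_sqrt_sq_add_sq, Complex.norm_eq_sqrt_sq_add_sq]
  apply Real.sqrt_le_sqrt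
  simp only [Complex.normSq_apply, Complex.sub_re, Complex.sub_im, Complex.ofReal_re,
    Complex.ofReal_im, sub_zero]
  nlinarith

lemma aux_lower (α β γ ω : ℝ) (hω : ω < 0) (hα0 : 0 < α) (hα1 : α ≤ 1)
    (hγ : 0 < γ) (hβ0 : α * γ ≤ β) (s : ℂ) (hs : 0 ≤ s.re) (h1 : 1 ≤ ‖s‖) :
    ‖s‖ ^ β ≤ ‖Fc α β γ ω s‖ := by
  have hs0 : (0:ℝ) < ‖s‖ := lt_of_lt_of_le one_pos h1
  have h2 : ‖s‖ ^ α ≤ ‖s ^ (α : ℂ) - (ω : ℂ)‖ := by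
    have := aux_abs_le ω hω.le (s ^ (α : ℂ)) (aux_re_nonneg α hα0 hα1 s hs)
    rwa [Complex.norm_cpow_real] at this
  unfold Fc
  rw [norm_mul, Complex.norm_cpow_real, Complex.norm_cpow_real]
  calc ‖s‖ ^ β = ‖s‖ ^ (β - α * γ) * (‖s‖ ^ α) ^ γ := by
        rw [← Real.rpow_mul (norm_nonneg s), ← Real.rpow_add hs0]; ring_nf
    _ ≤ ‖s‖ ^ (β - α * γ) * ‖s ^ (α : ℂ) - (ω : ℂ)‖ ^ γ := by
        apply mul_le_mul_of_nonneg_left _ (Real.rpow_nonneg (norm_nonneg s) _)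
        exact Real.rpow_le_rpow (Real.rpow_nonneg (norm_nonneg s) _) h2 hγ.le

lemma aux_mem (α ω : ℝ) (hω : ω < 0) (hα0 : 0 < α) (hα1 : α ≤ 1) :
    ∀ s ∈ Complex.slitPlane, s ^ (α : ℂ) - (ω : ℂ) ∈ Complex.slitPlane := by
  intro s hs
  have hs0 : s ≠ 0 := Complex.slitPlane_ne_zero hs
  rw [Complex.mem_slitPlane_iff]
  rw [Complex.cpow_def_of_ne_zero hs0]
  by_cases ha : s.arg = 0
  · left
    simp only [Complex.sub_re, Complex.exp_re, Complex.mul_im, Complex.log_im,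
      Complex.ofReal_im, Complex.ofReal_re, ha, zero_mul, mul_zero, add_zero,
      Real.cos_zero, mul_one]
    nlinarith [Real.exp_pos (Complex.log s * (α:ℂ)).re]
  · right
    simp only [Complex.sub_im, Complex.exp_im, Complex.mul_im, Complex.log_im,
      Complex.ofReal_im, Complex.ofReal_re, Complex.ofReal_im, zero_mul, mul_zero, add_zero]
    have hne : Real.sin (s.arg * α) ≠ 0 := by
      have hpi := Complex.arg_le_pi s
      have hpi' := Complex.neg_pi_lt_arg s
      have hnp : s.arg ≠ π := (Complex.mem_slitPlane_iff_arg.mp hs).1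
      rcases lt_or_gt_of_ne ha with h | h
      · have : Real.sin (-(s.arg * α)) > 0 := by
          apply Real.sin_pos_of_pos_of_lt_pi <;> nlinarith [Real.pi_pos]
        rw [Real.sin_neg] at this; linarith
      · have : Real.sin (s.arg * α) > 0 := by
          apply Real.sin_pos_of_pos_of_lt_pi <;> nlinarith [Real.pi_pos, lt_of_le_of_ne hpi hnp]
        linarith
    rw [zero_add, sub_zero]
    exact mul_ne_zero (Real.exp_ne_zero _) hne

lemma aux_analytic (α β γ ω : ℝ) (hω : ω < 0) (hα0 : 0 < α) (hα1 : α ≤ 1) :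
    AnalyticOnNhd ℂ (Fc α β γ ω) Complex.slitPlane := by
  have h1 : AnalyticOnNhd ℂ (fun s : ℂ => s ^ ((β - α * γ : ℝ) : ℂ)) Complex.slitPlane :=
    analyticOnNhd_id.cpow analyticOnNhd_const (fun z hz => hz)
  have h2 : AnalyticOnNhd ℂ (fun s : ℂ => (s ^ ((α : ℝ) : ℂ) - (ω : ℂ)) ^ ((γ : ℝ) : ℂ))
      Complex.slitPlane := by
    refine AnalyticOnNhd.cpow ?_ analyticOnNhd_const (aux_mem α ω hω hα0 hα1)
    exact (analyticOnNhd_id.cpow analyticOnNhd_const (fun z hz => hz)).sub analyticOnNhd_const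
  exact h1.mul h2

lemma aux_preconnected : IsPreconnected Complex.slitPlane := by
  have h : IsPathConnected Complex.slitPlane :=
    ⟨1, Complex.one_mem_slitPlane, fun _ hy =>
      JoinedIn.of_segment_subset (Complex.starConvex_one_slitPlane.segment_subset hy)⟩
  exact h.isConnected.isPreconnected

theorem unstable_roots_finite (α β γ ω : ℝ) (hω : ω < 0) (hα0 : 0 < α) (hα1 : α ≤ 1)
    (hαγ : 0 < α * γ) (hβ0 : α * γ ≤ β) (hβ1 : β ≤ 1) (lam : ℂ) :
    {s : ℂ | 0 ≤ s.re ∧ Fc α β γ ω s = lam}.Finite := by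
  have hγ : 0 < γ := by
    rcases mul_pos_iff.mp hαγ with ⟨_, h⟩ | ⟨h, _⟩
    · exact h
    · linarith
  have hβ : 0 < β := lt_of_lt_of_le hαγ hβ0
  set S := {s : ℂ | 0 ≤ s.re ∧ Fc α β γ ω s = lam} with hS
  -- the case lam = 0
  by_cases hlam : lam = 0
  · apply Set.Finite.subset (Set.finite_singleton 0)
    rintro s ⟨hre, hF⟩
    rw [hlam] at hF
    unfold Fc at hF
    rcases mul_eq_zero.mp hF with h | h
    · exact ((Complex.cpow_eq_zero_iff _ _).mp h).1
    · exfalso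
      have h0 : s ^ ((α : ℝ) : ℂ) - (ω : ℂ) = 0 := ((Complex.cpow_eq_zero_iff _ _).mp h).1
      have h1 : (s ^ ((α : ℝ) : ℂ)).re = ω := by
        rw [sub_eq_zero] at h0; rw [h0, Complex.ofReal_re]
      have h2 := aux_re_nonneg α hα0 hα1 s hre
      rw [h1] at h2
      linarith
  -- lam ≠ 0 : suppose infinite
  rw [← Set.not_infinite]
  intro hinf
  set R : ℝ := max 1 (‖lam‖ ^ (1 / β)) with hR
  have hR1 : (1:ℝ) ≤ R := le_max_left _ _
  have hsub : S ⊆ Metric.closedBall 0 R := by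
    intro s hs
    rw [Metric.mem_closedBall, dist_zero_right]
    rcases le_or_gt (‖s‖) 1 with h | h
    · exact le_trans h hR1
    · have hb := aux_lower α β γ ω hω hα0 hα1 hγ hβ0 s hs.1 h.le
      rw [hs.2] at hb
      have : ‖s‖ ≤ ‖lam‖ ^ (1 / β) := by
        have h2 : (‖s‖ ^ β) ^ (1/β) ≤ ‖lam‖ ^ (1/β) :=
          Real.rpow_le_rpow (Real.rpow_nonneg (norm_nonneg s) _) hb
            (by positivity)
        rwa [← Real.rpow_mul (norm_nonneg s), mul_one_div, div_self hβ.ne',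
          Real.rpow_one] at h2
      exact le_trans this (le_max_right _ _)
  obtain ⟨x, hxR, hacc⟩ := hinf.exists_accPt_of_subset_isCompact
    (isCompact_closedBall 0 R) hsub
  have hfreq : ∃ᶠ z in 𝓝[≠] x, z ∈ S := by
    rw [frequently_nhdsWithin_iff]
    exact ((accPt_iff_frequently).mp hacc).mono (fun z h => ⟨h.2, by simpa using h.1⟩)
  have hxre : 0 ≤ x.re := by
    have hx : x ∈ closure S :=
      mem_closure_iff_frequently.mpr (hfreq.filter_mono nhdsWithin_le_nhds)
    have hcl : IsClosed {z : ℂ | 0 ≤ z.re} := isClosed_le continuous_const Complex.continuous_re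
    have := closure_mono (show S ⊆ {z : ℂ | 0 ≤ z.re} from fun z hz => hz.1) hx
    rwa [hcl.closure_eq] at this
  by_cases hx0 : x = 0
  · subst hx0
    have hL : (𝓝[≠] (0:ℂ) ⊓ 𝓟 S).NeBot := frequently_mem_iff_neBot.mp hfreq
    rcases eq_or_lt_of_le hβ0 with hbe | hblt
    · -- β = αγ : contradiction via isolated zeros of (z - ω)^γ - lam at 0
      have hb0 : ((β - α * γ : ℝ) : ℂ) = 0 := by rw [← hbe]; simp
      have hFeq : ∀ s : ℂ, Fc α β γ ω s = (s ^ ((α:ℝ):ℂ) - (ω:ℂ)) ^ ((γ:ℝ):ℂ) := by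
        intro s; unfold Fc; rw [hb0, Complex.cpow_zero, one_mul]
      set g : ℂ → ℂ := (fun z => (z - (ω:ℂ)) ^ ((γ:ℝ):ℂ) - lam) with hgdef
      have hmem0 : (fun z : ℂ => z - (ω:ℂ)) 0 ∈ Complex.slitPlane := by
        rw [Complex.mem_slitPlane_iff]; left; simp only [zero_sub, Complex.neg_re,
          Complex.ofReal_re]; linarith
      have hga : AnalyticAt ℂ g 0 :=
        ((analyticAt_id.sub analyticAt_const).cpow analyticAt_const hmem0).sub analyticAt_const
      have hφt : Tendsto (fun s : ℂ => s ^ ((α:ℝ):ℂ)) (𝓝[≠] (0:ℂ) ⊓ 𝓟 S) (𝓝[≠] (0:ℂ)) := by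
        rw [tendsto_nhdsWithin_iff]
        constructor
        · have habse : (fun s : ℂ => ‖s ^ ((α:ℝ):ℂ)‖) = fun s => ‖s‖ ^ α := by
            funext s; rw [Complex.norm_cpow_real]
          have t1 : Tendsto (fun s : ℂ => ‖s‖) (𝓝 (0:ℂ)) (𝓝 0) := by
            simpa using (continuous_norm (E := ℂ)).tendsto 0
          have t2 : Tendsto (fun x : ℝ => x ^ α) (𝓝 (0:ℝ)) (𝓝 0) := by
            have := (Real.continuousAt_rpow_const 0 α (Or.inr hα0.le)).tendsto
            simpa [Real.zero_rpow hα0.ne'] using this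
          have ht : Tendsto (fun s : ℂ => s ^ ((α:ℝ):ℂ)) (𝓝 (0:ℂ)) (𝓝 0) := by
            rw [tendsto_zero_iff_norm_tendsto_zero, habse]
            exact t2.comp t1
          exact ht.mono_left (le_trans inf_le_left nhdsWithin_le_nhds)
        · have h1 : ∀ᶠ s in 𝓝[≠] (0:ℂ), s ∈ ({(0:ℂ)}ᶜ : Set ℂ) := eventually_mem_nhdsWithin
          refine ((h1.filter_mono inf_le_left).mono fun s hs => ?_)
          simp only [Set.mem_compl_iff, Set.mem_singleton_iff] at hs ⊢
          intro h
          exact hs (((Complex.cpow_eq_zero_iff _ _).mp h).1)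
      have hmemS : ∀ᶠ s in 𝓝[≠] (0:ℂ) ⊓ 𝓟 S, s ∈ S :=
        eventually_inf_principal.mpr (Filter.Eventually.of_forall fun s hs => hs)
      have hgz : ∀ᶠ z in Filter.map (fun s : ℂ => s ^ ((α:ℝ):ℂ)) (𝓝[≠] (0:ℂ) ⊓ 𝓟 S),
          g z = 0 := by
        rw [eventually_map]
        refine hmemS.mono fun s hs => ?_
        have h2 := hs.2
        rw [hFeq s] at h2
        simp only [hgdef]
        rw [h2, sub_self]
      haveI : (Filter.map (fun s : ℂ => s ^ ((α:ℝ):ℂ)) (𝓝[≠] (0:ℂ) ⊓ 𝓟 S)).NeBot := hL.map _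
      have hfr : ∃ᶠ z in 𝓝[≠] (0:ℂ), g z = 0 := (hgz.frequently).filter_mono hφt
      have hev0 : ∀ᶠ z in 𝓝 (0:ℂ), g z = 0 := hga.frequently_zero_iff_eventually_zero.mp hfr
      obtain ⟨ε, hε, hball⟩ := Metric.eventually_nhds_iff.mp hev0
      have h0 : g 0 = 0 := hball (by simpa using hε)
      have h1 : g ((ε/2 : ℝ):ℂ) = 0 := by
        apply hball
        rw [dist_zero_right, Complex.norm_real, Real.norm_eq_abs, abs_of_pos (by linarith)]
        linarith
      have e0 : ((-ω : ℝ):ℂ) ^ ((γ:ℝ):ℂ) = lam := by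
        have h0' : ((0:ℂ) - (ω:ℂ)) ^ ((γ:ℝ):ℂ) - lam = 0 := h0
        rw [sub_eq_zero] at h0'
        rw [← h0']
        norm_num
      have e1 : ((ε/2 - ω : ℝ):ℂ) ^ ((γ:ℝ):ℂ) = lam := by
        have h1' : (((ε/2 : ℝ):ℂ) - (ω:ℂ)) ^ ((γ:ℝ):ℂ) - lam = 0 := h1
        rw [sub_eq_zero] at h1'
        rw [← h1']
        push_cast
        ring_nf
      rw [← Complex.ofReal_cpow (by linarith) γ] at e0
      rw [← Complex.ofReal_cpow (by linarith) γ] at e1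
      have heq2 : ((-ω) ^ γ : ℝ) = ((ε/2 - ω) ^ γ : ℝ) := by
        exact_mod_cast e0.trans e1.symm
      have hlt : ((-ω) ^ γ : ℝ) < ((ε/2 - ω) ^ γ : ℝ) :=
        Real.rpow_lt_rpow (by linarith) (by linarith) hγ
      linarith
    · -- αγ < β : Fc → 0 at 0, so lam = 0
      have hbpos : 0 < β - α * γ := by linarith
      have htend : Tendsto (Fc α β γ ω) (𝓝[≠] (0:ℂ)) (𝓝 0) := by
        rw [tendsto_zero_iff_norm_tendsto_zero]
        have hbound : ∀ s : ℂ, ‖Fc α β γ ω s‖ ≤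
            ‖s‖ ^ (β - α * γ) * (‖s‖ ^ α + |ω|) ^ γ := by
          intro s
          unfold Fc
          rw [norm_mul, Complex.norm_cpow_real, Complex.norm_cpow_real]
          apply mul_le_mul_of_nonneg_left _ (Real.rpow_nonneg (norm_nonneg s) _)
          apply Real.rpow_le_rpow (norm_nonneg _) _ hγ.le
          calc ‖s ^ ((α:ℝ):ℂ) - (ω:ℂ)‖
              ≤ ‖s ^ ((α:ℝ):ℂ)‖ + ‖(ω:ℂ)‖ := by
                simpa using norm_sub_le (s ^ ((α:ℝ):ℂ)) ((ω:ℂ))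
            _ = ‖s‖ ^ α + |ω| := by rw [Complex.norm_cpow_real, Complex.norm_real, Real.norm_eq_abs]
        have t1 : Tendsto (fun s : ℂ => ‖s‖) (𝓝 (0:ℂ)) (𝓝 0) := by
          simpa using (continuous_norm (E := ℂ)).tendsto 0
        have t2 : Tendsto (fun x : ℝ => x ^ (β - α * γ)) (𝓝 (0:ℝ)) (𝓝 0) := by
          have := (Real.continuousAt_rpow_const 0 (β - α * γ) (Or.inr hbpos.le)).tendsto
          simpa [Real.zero_rpow hbpos.ne'] using this
        have t3 : Tendsto (fun x : ℝ => (x ^ α + |ω|) ^ γ) (𝓝 (0:ℝ)) (𝓝 (|ω| ^ γ)) := by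
          have ta : Tendsto (fun x : ℝ => x ^ α + |ω|) (𝓝 (0:ℝ)) (𝓝 (0 + |ω|)) := by
            have h' : Tendsto (fun x : ℝ => x ^ α) (𝓝 (0:ℝ)) (𝓝 0) := by
              simpa [Real.zero_rpow hα0.ne'] using
                (Real.continuousAt_rpow_const 0 α (Or.inr hα0.le)).tendsto
            exact h'.add tendsto_const_nhds
          have tb : Tendsto (fun x : ℝ => x ^ γ) (𝓝 (0 + |ω|)) (𝓝 (|ω| ^ γ)) := by
            have hw : |ω| ≠ 0 := abs_ne_zero.mpr hω.ne
            have := (Real.continuousAt_rpow_const |ω| γ (Or.inl hw)).tendsto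
            simpa using this
          exact tb.comp ta
        have tg : Tendsto (fun s : ℂ => ‖s‖ ^ (β - α * γ) *
            (‖s‖ ^ α + |ω|) ^ γ) (𝓝 (0:ℂ)) (𝓝 0) := by
          have := (t2.comp t1).mul (t3.comp t1)
          simpa using this
        exact squeeze_zero (fun s => norm_nonneg _) hbound (tg.mono_left nhdsWithin_le_nhds)
      have hmemS : ∀ᶠ s in 𝓝[≠] (0:ℂ) ⊓ 𝓟 S, s ∈ S :=
        eventually_inf_principal.mpr (Filter.Eventually.of_forall fun s hs => hs)
      have htend' : Tendsto (fun _ : ℂ => lam) (𝓝[≠] (0:ℂ) ⊓ 𝓟 S) (𝓝 0) :=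
        (htend.mono_left inf_le_left).congr' (hmemS.mono fun s hs => hs.2)
      exact hlam (tendsto_nhds_unique tendsto_const_nhds htend')
  · -- x ≠ 0 : identity theorem
    have hxs : x ∈ Complex.slitPlane := by
      rw [Complex.mem_slitPlane_iff]
      rcases eq_or_lt_of_le hxre with h | h
      · right
        intro him
        exact hx0 (by apply Complex.ext <;> simp [← h, him])
      · exact Or.inl h
    have hfe : ∃ᶠ z in 𝓝[≠] x, Fc α β γ ω z = lam := hfreq.mono fun z hz => hz.2
    have hFx : AnalyticAt ℂ (Fc α β γ ω) x := aux_analytic α β γ ω hω hα0 hα1 x hxs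
    have hev : ∀ᶠ z in 𝓝 x, Fc α β γ ω z = (fun _ => lam) z :=
      (hFx.frequently_eq_iff_eventually_eq analyticAt_const).mp hfe
    have hEq : Set.EqOn (Fc α β γ ω) (fun _ => lam) Complex.slitPlane :=
      (aux_analytic α β γ ω hω hα0 hα1).eqOn_of_preconnected_of_eventuallyEq
        analyticOnNhd_const aux_preconnected hxs hev
    -- evaluate at the real point R + 1
    have htmem : ((R + 1 : ℝ) : ℂ) ∈ Complex.slitPlane := by
      rw [Complex.mem_slitPlane_iff]; left; rw [Complex.ofReal_re]; linarith
    have habs : ‖((R + 1 : ℝ) : ℂ)‖ = R + 1 := by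
      rw [Complex.norm_real, Real.norm_eq_abs, abs_of_pos]; linarith
    have hlow := aux_lower α β γ ω hω hα0 hα1 hγ hβ0 ((R + 1 : ℝ) : ℂ)
      (by rw [Complex.ofReal_re]; linarith) (by rw [habs]; linarith)
    rw [hEq htmem, habs] at hlow
    -- (R+1)^β > |lam|
    have hgt : ‖lam‖ < (R + 1) ^ β := by
      have h1 : ‖lam‖ ^ (1/β) < R + 1 := lt_of_le_of_lt (le_max_right _ _) (lt_add_one R)
      have h2 : (‖lam‖ ^ (1/β)) ^ β < (R + 1) ^ β :=
        Real.rpow_lt_rpow (Real.rpow_nonneg (norm_nonneg lam) _) h1 hβ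
      rwa [← Real.rpow_mul (norm_nonneg lam), one_div_mul_cancel hβ.ne',
        Real.rpow_one] at h2
    exact absurd hlow (not_le.mpr hgt)
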